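/- Let a₀₁, a₂₀, a₁₁, a₀₂ ∈ ℝ. If the polynomial (2·a₂₀·x + a₁₁·y)·P + (a₀₁ + a₁₁·x + 2·a₀₂·y)·Q ∈ ℝ[x,y] has total degree at most 2, then a₂₀ = a₁₁ = a₀₂ = 0. (Consequently, any exponential factor of the form exp(a₀₀ + a₀₁y + a₂₀x² + a₁₁xy + a₀₂y²) reduces to exp(a₀₀ + a₀₁y), so the system admits no exponential factor with a genuinely quadratic exponent.) -/
import Mathlib


open MvPolynomial

/-- If `(2a₂₀x + a₁₁y)·P + (a₀₁ + a₁₁x + 2a₀₂y)·Q` has total degree at most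
`2`, where `P = x(C+x)(1−x−Ay)` and `Q = B·y·(C+x−y)`, then
`a₂₀ = a₁₁ = a₀₂ = 0`. (Hence any exponential factor
`exp(a₀₀ + a₀₁y + a₂₀x² + a₁₁xy + a₀₂y²)` reduces to `exp(a₀₀ + a₀₁y)`.) -/
theorem stmt_4 (A B C : ℝ) (hA : 0 < A) (hB : 0 < B) (hC : 0 < C)
    (a₀₁ a₂₀ a₁₁ a₀₂ : ℝ) :
    let x : MvPolynomial (Fin 2) ℝ := X 0
    let y : MvPolynomial (Fin 2) ℝ := X 1
    let P : MvPolynomial (Fin 2) ℝ := x * (MvPolynomial.C C + x) * (1 - x - MvPolynomial.C A * y)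
    let Q : MvPolynomial (Fin 2) ℝ := MvPolynomial.C B * y * (MvPolynomial.C C + x - y)
    ((MvPolynomial.C (2 * a₂₀) * x + MvPolynomial.C a₁₁ * y) * P +
      (MvPolynomial.C a₀₁ + MvPolynomial.C a₁₁ * x + MvPolynomial.C (2 * a₀₂) * y) * Q).totalDegree ≤ 2 →
    a₂₀ = 0 ∧ a₁₁ = 0 ∧ a₀₂ = 0 := by
  intro x y P Q h
  set S : MvPolynomial (Fin 2) ℝ :=
    (MvPolynomial.C (2 * a₂₀) * x + MvPolynomial.C a₁₁ * y) * P +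
      (MvPolynomial.C a₀₁ + MvPolynomial.C a₁₁ * x + MvPolynomial.C (2 * a₀₂) * y) * Q with hSdef
  have key : ∀ d : Fin 2 →₀ ℕ, 2 < d 0 + d 1 → MvPolynomial.coeff d S = 0 := by
    intro d hd
    apply MvPolynomial.coeff_eq_zero_of_totalDegree_lt
    have hsum : ∑ i ∈ d.support, d i = d 0 + d 1 := by
      rw [Finset.sum_subset (Finset.subset_univ _)
        (by intro i _ hi; simpa using (Finsupp.notMem_support_iff.mp hi))]
      exact Fin.sum_univ_two d
    rw [hsum]; omega
  have hS : S =
      MvPolynomial.C (2*a₂₀*C) * x^2 * y^0 +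
      MvPolynomial.C (2*a₂₀*(1-C)) * x^3 * y^0 +
      MvPolynomial.C (-(2*a₂₀)) * x^4 * y^0 +
      MvPolynomial.C (-(2*a₂₀*A*C)) * x^2 * y^1 +
      MvPolynomial.C (-(2*a₂₀*A)) * x^3 * y^1 +
      MvPolynomial.C (a₁₁*C) * x^1 * y^1 +
      MvPolynomial.C (a₁₁*(1-C)) * x^2 * y^1 +
      MvPolynomial.C (-a₁₁) * x^3 * y^1 +
      MvPolynomial.C (-(a₁₁*A*C)) * x^1 * y^2 +
      MvPolynomial.C (-(a₁₁*A)) * x^2 * y^2 +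
      MvPolynomial.C (a₀₁*B*C) * x^0 * y^1 +
      MvPolynomial.C (a₀₁*B) * x^1 * y^1 +
      MvPolynomial.C (-(a₀₁*B)) * x^0 * y^2 +
      MvPolynomial.C (a₁₁*B*C) * x^1 * y^1 +
      MvPolynomial.C (a₁₁*B) * x^2 * y^1 +
      MvPolynomial.C (-(a₁₁*B)) * x^1 * y^2 +
      MvPolynomial.C (2*a₀₂*B*C) * x^0 * y^2 +
      MvPolynomial.C (2*a₀₂*B) * x^1 * y^2 +
      MvPolynomial.C (-(2*a₀₂*B)) * x^0 * y^3 := by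
    rw [hSdef]
    simp only [map_mul, map_add, map_sub, map_neg, map_ofNat, map_one]
    ring
  have h1 := key (Finsupp.single 0 4 + Finsupp.single 1 0) (by simp)
  have h2 := key (Finsupp.single 0 2 + Finsupp.single 1 2) (by simp)
  have h3 := key (Finsupp.single 0 0 + Finsupp.single 1 3) (by simp)
  rw [hS] at h1 h2 h3
  simp only [coeff_add, MvPolynomial.X_pow_eq_monomial, x, y,
    MvPolynomial.C_mul_monomial, MvPolynomial.monomial_mul, mul_one,
    MvPolynomial.coeff_monomial,
    Finsupp.ext_iff, Fin.forall_fin_two, Finsupp.add_apply, Finsupp.single_apply] at h1 h2 h3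
  norm_num at h1 h2 h3
  exact ⟨h1, h2.resolve_right hA.ne', h3.resolve_right hB.ne'⟩
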